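/- Let f ∈ C¹(ℝ) ∩ L^p(ℝ), 1 < p < ∞, with f' continuous. Then ∫_ℝ log(1 + |f'(x)|)^p dx ≤ liminf_{λ→∞} λ^p 𝓛²({(x,t) ∈ ℝ × (0,∞) : log(1 + |f(x+t)−f(x)|/t) · t^{−1/p} > λ}). -/

import Mathlib

open MeasureTheory Filter Set
open scoped ENNReal Topology

noncomputable section

/-- The superlevel set of the BVY functional. -/
def logBVYSet (p : ℝ) (f : ℝ → ℝ) (l : ℝ) : Set (ℝ × ℝ) :=
  {q : ℝ × ℝ | 0 < q.2 ∧
    l < Real.log (1 + |f (q.1 + q.2) - f q.1| / q.2) * q.2 ^ (-(1 / p))}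

lemma logBVYSet_measurable (p : ℝ) (f : ℝ → ℝ) (hf : Continuous f) (l : ℝ) :
    MeasurableSet (logBVYSet p f l) := by
  have h1 : Measurable fun q : ℝ × ℝ =>
      Real.log (1 + |f (q.1 + q.2) - f q.1| / q.2) * q.2 ^ (-(1 / p)) := by
    apply Measurable.mul
    · apply Real.measurable_log.comp
      apply Measurable.add measurable_const
      exact (((hf.comp (continuous_fst.add continuous_snd)).measurable.sub
        (hf.comp continuous_fst).measurable).abs).div measurable_snd
    · exact measurable_snd.pow measurable_const
  exact (measurableSet_lt measurable_const measurable_snd).inter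
    (measurableSet_lt measurable_const h1)

/-- Lower bound for the logarithmic Brezis–Van Schaftingen–Yung functional:
`∫ log(1+|f'(x)|)^p dx ≤ liminf_{λ→∞} λ^p 𝓛²({(x,t) : log(1+|f(x+t)−f(x)|/t) t^{−1/p} > λ})`. -/
theorem log_lower_bound_one_dim
    (p : ℝ) (hp : 1 < p)
    (f : ℝ → ℝ) (hf : ContDiff ℝ 1 f)
    (hfp : MemLp f (ENNReal.ofReal p) volume) :
    ∫⁻ x, ENNReal.ofReal (Real.log (1 + |deriv f x|) ^ p)
      ≤ Filter.liminf (fun l : ℝ => ENNReal.ofReal (l ^ p) *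
          (volume.prod (volume.restrict (Set.Ioi (0 : ℝ))))
            {q : ℝ × ℝ | 0 < q.2 ∧
              l < Real.log (1 + |f (q.1 + q.2) - f q.1| / q.2) * q.2 ^ (-(1 / p))})
        Filter.atTop := by
  have hp0 : (0:ℝ) < p := lt_trans one_pos hp
  have hp0' : p ≠ 0 := ne_of_gt hp0
  have h1p : (0:ℝ) < 1 / p := by positivity
  set ν : Measure ℝ := volume.restrict (Set.Ioi (0:ℝ)) with hνdef
  set μ2 : Measure (ℝ × ℝ) := volume.prod ν with hμ2def
  set L : ℝ → ℝ := fun x => Real.log (1 + |deriv f x|) with hLdef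
  have hL0 : ∀ x, 0 ≤ L x := fun x =>
    Real.log_nonneg (by linarith [abs_nonneg (deriv f x)])
  set m : ℝ → ℝ → ℝ≥0∞ := fun l x => ν (Prod.mk x ⁻¹' logBVYSet p f l) with hmdef
  set φ : ℕ → ℝ → ℝ≥0∞ :=
    fun n x => ENNReal.ofReal ((n:ℝ) ^ p) * m ((n:ℝ) + 1) x with hφdef
  have hSm : ∀ l, MeasurableSet (logBVYSet p f l) :=
    logBVYSet_measurable p f hf.continuous
  -- pointwise convergence of difference quotients
  have htend : ∀ x, Tendsto (fun t : ℝ => Real.log (1 + |f (x + t) - f x| / t))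
      (𝓝[>] (0:ℝ)) (𝓝 (L x)) := by
    intro x
    have hd : HasDerivAt f (deriv f x) x :=
      ((hf.differentiable one_ne_zero) x).hasDerivAt
    have h2 : Tendsto (fun t : ℝ => t⁻¹ • (f (x + t) - f x)) (𝓝[>] (0:ℝ))
        (𝓝 (deriv f x)) := hd.tendsto_slope_zero_right
    have h3 : Tendsto (fun t : ℝ => |f (x + t) - f x| / t) (𝓝[>] (0:ℝ))
        (𝓝 |deriv f x|) := by
      have := (continuous_abs.tendsto _).comp h2
      refine this.congr' ?_
      filter_upwards [self_mem_nhdsWithin] with t (ht : 0 < t)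
      simp only [Function.comp, smul_eq_mul, abs_mul, abs_inv, abs_of_pos ht]
      rw [inv_mul_eq_div]
    have h4 : Tendsto (fun y : ℝ => Real.log (1 + y)) (𝓝 |deriv f x|)
        (𝓝 (L x)) := by
      have hcont : ContinuousAt (fun y : ℝ => Real.log (1 + y)) |deriv f x| := by
        apply (Real.continuousAt_log ?_).comp (continuousAt_const.add continuousAt_id)
        show (1:ℝ) + id |deriv f x| ≠ 0
        simp only [id]
        positivity
      exact hcont.tendsto
    exact h4.comp h3
  -- claim C: lower bound on liminf of φ at each point
  have claimC : ∀ x (a : ℝ), 0 < a → a < L x →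
      ENNReal.ofReal (a ^ p) ≤ Filter.liminf (fun n : ℕ => φ n x) Filter.atTop := by
    intro x a ha haL
    have hev : {t : ℝ | a < Real.log (1 + |f (x + t) - f x| / t)} ∈ 𝓝[>] (0:ℝ) :=
      (htend x).eventually (eventually_gt_nhds haL)
    obtain ⟨δ, hδ, hδsub⟩ := mem_nhdsGT_iff_exists_Ioo_subset.mp hev
    have hδ0 : (0:ℝ) < δ := hδ
    -- section measure lower bound
    have hm : ∀ n : ℕ, ENNReal.ofReal (min δ ((a / ((n:ℝ) + 1)) ^ p))
        ≤ m ((n:ℝ) + 1) x := by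
      intro n
      have hn1 : (0:ℝ) < (n:ℝ) + 1 := by positivity
      have hsub2 : Ioo (0:ℝ) (min δ ((a / ((n:ℝ)+1)) ^ p))
          ⊆ Prod.mk x ⁻¹' logBVYSet p f ((n:ℝ)+1) := by
        intro t ht
        obtain ⟨ht0, htm⟩ := ht
        have htδ : t < δ := lt_of_lt_of_le htm (min_le_left _ _)
        have hta : t < (a / ((n:ℝ)+1)) ^ p := lt_of_lt_of_le htm (min_le_right _ _)
        refine ⟨ht0, ?_⟩
        show ((n:ℝ)+1) < Real.log (1 + |f (x + t) - f x| / t) * t ^ (-(1/p))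
        have hlog : a < Real.log (1 + |f (x + t) - f x| / t) := hδsub ⟨ht0, htδ⟩
        have htp : 0 < t ^ (1/p) := Real.rpow_pos_of_pos ht0 _
        have h4 : t ^ (1/p) < a / ((n:ℝ)+1) := by
          have := Real.rpow_lt_rpow ht0.le hta h1p
          rwa [← Real.rpow_mul (by positivity), mul_one_div_cancel hp0',
            Real.rpow_one] at this
        have h5 : ((n:ℝ)+1) < a * t ^ (-(1/p)) := by
          rw [Real.rpow_neg ht0.le, ← div_eq_mul_inv, lt_div_iff₀ htp]
          calc ((n:ℝ)+1) * t ^ (1/p) < ((n:ℝ)+1) * (a / ((n:ℝ)+1)) :=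
                mul_lt_mul_of_pos_left h4 hn1
            _ = a := by field_simp
        refine lt_of_lt_of_le h5 ?_
        exact mul_le_mul_of_nonneg_right hlog.le (Real.rpow_nonneg ht0.le _)
      calc ENNReal.ofReal (min δ ((a / ((n:ℝ)+1)) ^ p))
          = ν (Ioo 0 (min δ ((a / ((n:ℝ)+1)) ^ p))) := by
            rw [hνdef, Measure.restrict_apply measurableSet_Ioo,
              inter_eq_left.mpr Ioo_subset_Ioi_self, Real.volume_Ioo, sub_zero]
        _ ≤ m ((n:ℝ)+1) x := measure_mono hsub2
    -- eventually the min is the second term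
    have htend0 : Tendsto (fun n : ℕ => (a / ((n:ℝ)+1)) ^ p) atTop (𝓝 0) := by
      have h0 : Tendsto (fun n : ℕ => a / ((n:ℝ)+1)) atTop (𝓝 0) := by
        apply Tendsto.div_atTop tendsto_const_nhds
        exact tendsto_atTop_add_const_right _ _ tendsto_natCast_atTop_atTop
      have hc : ContinuousAt (fun y : ℝ => y ^ p) 0 :=
        Real.continuousAt_rpow_const 0 p (Or.inr hp0.le)
      have := hc.tendsto.comp h0
      rwa [Real.zero_rpow hp0'] at this
    have hmin : ∀ᶠ n : ℕ in atTop, (a / ((n:ℝ)+1)) ^ p ≤ δ :=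
      htend0.eventually (eventually_le_nhds hδ0)
    -- eventual lower bound for φ
    have hφlb : ∀ᶠ n : ℕ in atTop,
        ENNReal.ofReal ((n:ℝ) ^ p * (a / ((n:ℝ)+1)) ^ p) ≤ φ n x := by
      filter_upwards [hmin] with n hn
      have h6 : ENNReal.ofReal ((a / ((n:ℝ)+1)) ^ p) ≤ m ((n:ℝ)+1) x := by
        have := hm n; rwa [min_eq_right hn] at this
      calc ENNReal.ofReal ((n:ℝ) ^ p * (a / ((n:ℝ)+1)) ^ p)
          = ENNReal.ofReal ((n:ℝ) ^ p) * ENNReal.ofReal ((a / ((n:ℝ)+1)) ^ p) :=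
            ENNReal.ofReal_mul (Real.rpow_nonneg n.cast_nonneg p)
        _ ≤ φ n x := mul_le_mul_right h6 _
    -- the minorant tends to ofReal (a ^ p)
    have hψ : Tendsto (fun n : ℕ => ENNReal.ofReal ((n:ℝ) ^ p * (a / ((n:ℝ)+1)) ^ p))
        atTop (𝓝 (ENNReal.ofReal (a ^ p))) := by
      have heq : ∀ n : ℕ, (n:ℝ) ^ p * (a / ((n:ℝ)+1)) ^ p
          = (a * ((n:ℝ) / ((n:ℝ)+1))) ^ p := by
        intro n
        rw [← Real.mul_rpow n.cast_nonneg (by positivity)]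
        congr 1
        field_simp
      have h7 : Tendsto (fun n : ℕ => a * ((n:ℝ) / ((n:ℝ)+1))) atTop (𝓝 a) := by
        have := (tendsto_natCast_div_add_atTop (1:ℝ)).const_mul a
        simpa using this
      have h8 : Tendsto (fun n : ℕ => (a * ((n:ℝ) / ((n:ℝ)+1))) ^ p) atTop
          (𝓝 (a ^ p)) :=
        ((Real.continuousAt_rpow_const a p (Or.inl ha.ne')).tendsto).comp h7
      have h9 := (ENNReal.continuous_ofReal.tendsto _).comp h8
      refine h9.congr fun n => ?_
      simp [heq n]
    calc ENNReal.ofReal (a ^ p)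
        = Filter.liminf (fun n : ℕ => ENNReal.ofReal ((n:ℝ) ^ p * (a / ((n:ℝ)+1)) ^ p))
            atTop := (hψ.liminf_eq).symm
      _ ≤ Filter.liminf (fun n : ℕ => φ n x) atTop := liminf_le_liminf hφlb
  -- pointwise bound
  have hpoint : ∀ x, ENNReal.ofReal (L x ^ p)
      ≤ Filter.liminf (fun n : ℕ => φ n x) Filter.atTop := by
    intro x
    rcases eq_or_lt_of_le (hL0 x) with h0 | h0
    · rw [← h0, Real.zero_rpow hp0', ENNReal.ofReal_zero]; exact zero_le
    · refine le_of_forall_lt fun c hc => ?_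
      have hc' : c ≠ ⊤ := hc.ne_top
      have hLp : 0 < L x ^ p := Real.rpow_pos_of_pos h0 p
      have hcb : max c.toReal 0 < L x ^ p := by
        apply max_lt _ hLp
        exact (ENNReal.lt_ofReal_iff_toReal_lt hc').mp hc
      set b : ℝ := (max c.toReal 0 + L x ^ p) / 2 with hbdef
      have hb1 : max c.toReal 0 < b := by rw [hbdef]; linarith
      have hb2 : b < L x ^ p := by rw [hbdef]; linarith
      have hb0 : 0 < b := lt_of_le_of_lt (le_max_right _ _) hb1
      set a : ℝ := b ^ (1/p) with hadef
      have ha0 : 0 < a := Real.rpow_pos_of_pos hb0 _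
      have haL : a < L x := by
        have := Real.rpow_lt_rpow hb0.le hb2 h1p
        rwa [← Real.rpow_mul (hL0 x), mul_one_div_cancel hp0', Real.rpow_one] at this
      have hap : a ^ p = b := by
        rw [hadef, ← Real.rpow_mul hb0.le, one_div_mul_cancel hp0', Real.rpow_one]
      have hclt : c < ENNReal.ofReal (a ^ p) := by
        rw [hap, ENNReal.lt_ofReal_iff_toReal_lt hc']
        exact lt_of_le_of_lt (le_max_left _ _) hb1
      exact lt_of_lt_of_le hclt (claimC x a ha0 haL)
  -- measurability of φ
  have hmm : ∀ l : ℝ, Measurable fun x => m l x := fun l =>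
    measurable_measure_prodMk_left (hSm l)
  have hφmeas : ∀ n : ℕ, Measurable (φ n) := fun n => (hmm _).const_mul _
  have hφint : ∀ n : ℕ, ∫⁻ x, φ n x
      = ENNReal.ofReal ((n:ℝ) ^ p) * μ2 (logBVYSet p f ((n:ℝ)+1)) := by
    intro n
    rw [hφdef]
    simp only
    rw [lintegral_const_mul _ (hmm _), hμ2def, Measure.prod_apply (hSm _)]
  -- main chain
  show ∫⁻ x, ENNReal.ofReal (L x ^ p)
      ≤ Filter.liminf (fun l : ℝ => ENNReal.ofReal (l ^ p) * μ2 (logBVYSet p f l))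
        Filter.atTop
  calc ∫⁻ x, ENNReal.ofReal (L x ^ p)
      ≤ ∫⁻ x, Filter.liminf (fun n : ℕ => φ n x) Filter.atTop :=
        lintegral_mono hpoint
    _ ≤ Filter.liminf (fun n : ℕ => ∫⁻ x, φ n x) Filter.atTop :=
        lintegral_liminf_le hφmeas
    _ = Filter.liminf (fun n : ℕ =>
          ENNReal.ofReal ((n:ℝ) ^ p) * μ2 (logBVYSet p f ((n:ℝ)+1))) Filter.atTop := by
        simp only [hφint]
    _ ≤ Filter.liminf (fun l : ℝ => ENNReal.ofReal (l ^ p) * μ2 (logBVYSet p f l))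
          Filter.atTop := by
        refine le_of_forall_lt fun c hc => ?_
        obtain ⟨c', hc1, hc2⟩ := exists_between hc
        have hev : ∀ᶠ n : ℕ in atTop, c' < ENNReal.ofReal ((n:ℝ) ^ p)
            * μ2 (logBVYSet p f ((n:ℝ)+1)) := eventually_lt_of_lt_liminf hc2
        obtain ⟨N, hN⟩ := eventually_atTop.mp hev
        have hev2 : ∀ᶠ l : ℝ in atTop, c'
            ≤ ENNReal.ofReal (l ^ p) * μ2 (logBVYSet p f l) := by
          filter_upwards [eventually_ge_atTop (N:ℝ)] with l hl
          have hl0 : (0:ℝ) ≤ l := le_trans (Nat.cast_nonneg N) hl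
          have hfl : N ≤ ⌊l⌋₊ := Nat.le_floor hl
          refine le_trans (hN _ hfl).le ?_
          apply mul_le_mul'
          · exact ENNReal.ofReal_le_ofReal
              (Real.rpow_le_rpow (Nat.cast_nonneg _) (Nat.floor_le hl0) hp0.le)
          · apply measure_mono
            intro q hq
            exact ⟨hq.1, lt_trans (Nat.lt_floor_add_one l) hq.2⟩
        exact lt_of_lt_of_le hc1 (le_liminf_of_le (by isBoundedDefault) hev2)
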